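/- Let (X, D) be a metric space and μ : X → ℝ a 1-Lipschitz function. Let x_*, x', x ∈ X, let f, f' be real numbers and r, r' ≥ 0 real numbers such that |f − μ(x)| ≤ r, |f' − μ(x')| ≤ r', D(x_*, x') ≤ r', and f + 2·r ≥ f' + 2·r'. Then μ(x_*) − μ(x) ≤ 3·r. -/
import Mathlib

/-- Under a clean process, if the optimal arm `xstar` lies in the confidence ball
`B(x', r')` of some active arm `x'`, and arm `x` is selected by the UCB rule
maximizing `f(·) + 2r(·)`, then the suboptimality gap of `x` is at most `3 r`. -/
theorem stmt_5 {X : Type*} [MetricSpace X] (μ : X → ℝ)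
    (hlip : ∀ x y : X, |μ x - μ y| ≤ dist x y)
    (xstar x' x : X) (f f' r r' : ℝ) (hr : 0 ≤ r) (hr' : 0 ≤ r')
    (hf : |f - μ x| ≤ r) (hf' : |f' - μ x'| ≤ r')
    (hball : dist xstar x' ≤ r') (hucb : f + 2 * r ≥ f' + 2 * r') :
    μ xstar - μ x ≤ 3 * r := by
  have h1 := (abs_le.mp (hlip xstar x')).2
  have h2 := (abs_le.mp hf).2
  have h3 := (abs_le.mp hf').1
  linarith
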